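/- (Lifting property for twisted involutions) Let v, w ∈ I(θ) with v ≤ w in Bruhat order, and suppose s ∈ S is a right descent of w. Then (i) v·s̲ ≤ w, and (ii) if s is also a right descent of v, then v·s̲ ≤ w·s̲. -/

import Mathlib

/-- `θ` maps simple reflections to simple reflections. -/
def PreservesSimples {B W : Type*} [Group W] {M : CoxeterMatrix B}
    (cs : CoxeterSystem M W) (θ : W ≃* W) : Prop :=
  ∀ i : B, ∃ j : B, θ (cs.simple i) = cs.simple j

open Classical in
/-- The twisted action `w · s̲`. -/
noncomputable def twMul {B W : Type*} [Group W] {M : CoxeterMatrix B}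
    (cs : CoxeterSystem M W) (θ : W ≃* W) (w : W) (i : B) : W :=
  if θ (cs.simple i) * w * cs.simple i = w then w * cs.simple i
  else θ (cs.simple i) * w * cs.simple i

/-- Action of a word of symbols. -/
noncomputable def twWord {B W : Type*} [Group W] {M : CoxeterMatrix B}
    (cs : CoxeterSystem M W) (θ : W ≃* W) (w : W) (l : List B) : W :=
  l.foldl (twMul cs θ) w

/-- The Bruhat order on a Coxeter group: `v ≤ w` iff `w = v t₁ ⋯ tₖ` for
reflections `t₁, …, tₖ` with the lengths strictly increasing at each step. -/
def bruhatLE {B W : Type*} [Group W] {M : CoxeterMatrix B}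
    (cs : CoxeterSystem M W) (v w : W) : Prop :=
  ∃ l : List W, (∀ t ∈ l, cs.IsReflection t) ∧ l.foldl (· * ·) v = w ∧
    ∀ k < l.length,
      cs.length ((l.take k).foldl (· * ·) v) <
        cs.length ((l.take (k + 1)).foldl (· * ·) v)

namespace BruhatAux

section Grp
variable {G : Type*} [Group G] {a b : G}

private theorem inv_of_sq (ha : a * a = 1) : a⁻¹ = a := by
  rw [← mul_eq_one_iff_inv_eq]; exact ha

private theorem conj_pow_sq (ha : a * a = 1) (hb : b * b = 1) (r : ℕ) :
    b * (a * b) ^ r = ((a * b) ^ r)⁻¹ * b := by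
  induction r with
  | zero => simp
  | succ r ih =>
    have hb1 : b * (a * b) = (a * b)⁻¹ * b := by
      rw [mul_inv_rev, inv_of_sq ha, inv_of_sq hb, mul_assoc]
    calc b * (a*b)^(r+1) = b * (a*b)^r * (a*b) := by rw [pow_succ, mul_assoc]
      _ = ((a*b)^r)⁻¹ * (b * (a*b)) := by rw [ih, mul_assoc]
      _ = ((a*b)^r)⁻¹ * ((a*b)⁻¹ * b) := by rw [hb1]
      _ = ((a*b) * (a*b)^r)⁻¹ * b := by conv_rhs => rw [mul_inv_rev, mul_assoc]
      _ = ((a*b)^(r+1))⁻¹ * b := by rw [← pow_succ']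

end Grp

open CoxeterSystem List
open scoped Classical

variable {B W : Type*} [Group W] {M : CoxeterMatrix B} (cs : CoxeterSystem M W)

local prefix:100 "s" => cs.simple
local prefix:100 "π" => cs.wordProd
local prefix:100 "ℓ" => cs.length
local prefix:100 "ris" => cs.rightInvSeq

/-- The function underlying the reflection representation on `W × ZMod 2`. -/
private noncomputable def pf (i : B) : W × ZMod 2 → W × ZMod 2 :=
  fun x => (s i * x.1 * s i, x.2 + if x.1 = s i then 1 else 0)

private theorem pf_invol (i : B) : Function.Involutive (pf cs i) := by
  intro ⟨t, e⟩
  simp only [pf]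
  have h1 : s i * (s i * t * s i) * s i = t := by
    simp [← mul_assoc, cs.simple_mul_simple_cancel_right, cs.simple_mul_simple_cancel_left]
  have h2 : (s i * t * s i = s i) ↔ (t = s i) := by
    constructor
    · intro h
      have := congrArg (fun x => s i * x * s i) h
      simpa [mul_assoc, cs.simple_mul_simple_cancel_left, cs.simple_mul_simple_self,
        cs.simple_mul_simple_cancel_right] using this
    · rintro rfl
      simp [cs.simple_mul_simple_cancel_right]
  have h11 : (1 : ZMod 2) + 1 = 0 := rfl
  simp only [Prod.mk.injEq]
  refine ⟨h1, ?_⟩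
  simp only [h2]
  rcases em (t = s i) with h | h <;> simp [h, add_assoc, h11]

/-- One letter of the reflection representation, as a permutation. -/
private noncomputable def pF (i : B) : Equiv.Perm (W × ZMod 2) := (pf_invol cs i).toPerm

private theorem pF_apply (i : B) (t : W) (e : ZMod 2) :
    pF cs i (t, e) = (s i * t * s i, e + if t = s i then 1 else 0) := rfl

private theorem pFpF_pow_apply (i j : B) (k : ℕ) (t : W) (e : ZMod 2) :
    ((pF cs i * pF cs j) ^ k) (t, e) =
      ((s i * s j) ^ k * t * ((s i * s j) ^ k)⁻¹,
        e + ∑ r ∈ Finset.range (2 * k), (if t = ((s i * s j) ^ r)⁻¹ * s j then 1 else 0)) := by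
  have hii : s i * s i = 1 := cs.simple_mul_simple_self i
  have hjj : s j * s j = 1 := cs.simple_mul_simple_self j
  induction k generalizing t e with
  | zero => simp
  | succ k ih =>
    set q : W := s i * s j with hq
    have hbq : ∀ r : ℕ, s j * q ^ r = (q ^ r)⁻¹ * s j := conj_pow_sq hii hjj
    have key : ∀ r : ℕ, q⁻¹ * ((q ^ r)⁻¹ * s j) * q = (q ^ (r + 2))⁻¹ * s j := by
      intro r
      calc q⁻¹ * ((q ^ r)⁻¹ * s j) * q = q⁻¹ * ((s j * q ^ r) * q) := by
            rw [← hbq r, mul_assoc]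
        _ = q⁻¹ * (s j * q ^ (r+1)) := by rw [pow_succ]; group
        _ = q⁻¹ * ((q ^ (r+1))⁻¹ * s j) := by rw [hbq (r+1)]
        _ = (q ^ (r+2))⁻¹ * s j := by
            rw [show (q ^ (r+2))⁻¹ = q⁻¹ * (q^(r+1))⁻¹ from by rw [pow_succ, mul_inv_rev]]
            group
    have step : ∀ t e, (pF cs i * pF cs j) (t, e) =
        (q * t * q⁻¹, e + ((if t = s j then 1 else 0) + if t = q⁻¹ * s j then 1 else 0)) := by
      intro t e
      have hqi : q⁻¹ * s j = s j * s i * s j := by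
        rw [hq, mul_inv_rev, inv_of_sq hii, inv_of_sq hjj, mul_assoc]
      have hcond : (s j * t * s j = s i) ↔ (t = q⁻¹ * s j) := by
        rw [hqi]
        constructor
        · intro h
          have := congrArg (fun x => s j * x * s j) h
          rw [← this]
          simp [mul_assoc, cs.simple_mul_simple_cancel_left, hjj,
            cs.simple_mul_simple_cancel_right]
        · rintro rfl
          simp [mul_assoc, cs.simple_mul_simple_cancel_left, cs.simple_mul_simple_self]
      show pF cs i (pF cs j (t, e)) = _
      rw [pF_apply, pF_apply]
      simp only [Prod.mk.injEq]
      constructor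
      · rw [hq]
        simp [mul_inv_rev, inv_of_sq hii, inv_of_sq hjj, mul_assoc]
      · rw [if_congr hcond rfl rfl]
        ring
    rw [pow_succ, Equiv.Perm.mul_apply, step, ih]
    simp only [Prod.mk.injEq]
    constructor
    · rw [pow_succ]
      group
    · have hshift : ∀ r : ℕ, (q * t * q⁻¹ = (q ^ r)⁻¹ * s j) ↔ (t = (q ^ (r + 2))⁻¹ * s j) := by
        intro r
        rw [← key r]
        constructor
        · intro h
          have := congrArg (fun x => q⁻¹ * x * q) h
          rw [← this]; group
        · intro h
          have := congrArg (fun x => q * x * q⁻¹) h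
          rw [this]; group
      have hsum : ∑ r ∈ Finset.range (2 * k),
            (if q * t * q⁻¹ = (q ^ r)⁻¹ * s j then (1 : ZMod 2) else 0)
          = ∑ r ∈ Finset.range (2 * k), (if t = (q ^ (r + 2))⁻¹ * s j then 1 else 0) :=
        Finset.sum_congr rfl fun r _ => if_congr (hshift r) rfl rfl
      rw [hsum]
      rw [show 2 * (k + 1) = (2 * k + 1) + 1 from by ring]
      rw [Finset.sum_range_succ', Finset.sum_range_succ']
      simp only [pow_zero, inv_one, one_mul, pow_one, zero_add,
        show ∀ r : ℕ, r + 1 + 1 = r + 2 from fun r => rfl]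
      abel

private theorem pF_liftable : CoxeterMatrix.IsLiftable M (pF cs) := by
  intro i j
  refine Equiv.ext fun ⟨t, e⟩ => ?_
  show ((pF cs i * pF cs j) ^ M i j) (t, e) = (t, e)
  rw [pFpF_pow_apply]
  have hq : (s i * s j) ^ M i j = 1 := cs.simple_mul_simple_pow i j
  simp only [Prod.mk.injEq]
  constructor
  · rw [hq]; group
  · rw [two_mul, Finset.sum_range_add]
    have : ∀ r ∈ Finset.range (M i j),
        (if t = ((s i * s j) ^ (M i j + r))⁻¹ * s j then (1 : ZMod 2) else 0)
        = (if t = ((s i * s j) ^ r)⁻¹ * s j then 1 else 0) := by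
      intro r _
      rw [pow_add, hq, one_mul]
    rw [Finset.sum_congr rfl this]
    have : ∀ x : ZMod 2, x + x = 0 := by decide
    rw [this]
    simp

/-- The reflection representation of `W` on `W × ZMod 2`. -/
private noncomputable def rho : W →* Equiv.Perm (W × ZMod 2) :=
  CoxeterSystem.lift cs ⟨pF cs, pF_liftable cs⟩

private theorem rho_simple (i : B) : rho cs (s i) = pF cs i :=
  cs.lift_apply_simple (pF_liftable cs) i

private theorem ris_cons (i : B) (ω : List B) :
    ris (i :: ω) = ((π ω)⁻¹ * s i * π ω) :: ris ω := rfl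

private theorem rho_wordProd (ω : List B) (t : W) (e : ZMod 2) :
    rho cs (π ω) (t, e) =
      (π ω * t * (π ω)⁻¹, e + (List.count t (ris ω) : ZMod 2)) := by
  induction ω generalizing e with
  | nil => simp [CoxeterSystem.wordProd_nil]
  | cons i ω ih =>
    rw [cs.wordProd_cons, map_mul, Equiv.Perm.mul_apply, ih, rho_simple, pF_apply]
    have hcond : (π ω * t * (π ω)⁻¹ = s i) ↔ (t = (π ω)⁻¹ * s i * π ω) := by
      constructor
      · intro h
        rw [← h]; group
      · intro h
        rw [h]; group
    rw [ris_cons, List.count_cons]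
    simp only [Prod.mk.injEq]
    constructor
    · rw [mul_inv_rev, cs.inv_simple]
      group
    · rw [if_congr hcond rfl rfl]
      push_cast
      simp only [beq_iff_eq]
      rcases em (t = (π ω)⁻¹ * s i * π ω) with h | h
      · rw [if_pos h, if_pos h.symm]; ring
      · rw [if_neg h, if_neg fun hh => h hh.symm]; ring

private theorem count_parity (ω ω' : List B) (h : π ω = π ω') (t : W) :
    (List.count t (ris ω) : ZMod 2) = (List.count t (ris ω') : ZMod 2) := by
  have h1 := rho_wordProd cs ω t 0
  have h2 := rho_wordProd cs ω' t 0
  rw [h, h2] at h1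
  have := congrArg Prod.snd h1
  simpa using this.symm

private theorem ris_append (α β : List B) :
    ris (α ++ β) = (ris α).map (fun x => (π β)⁻¹ * x * π β) ++ ris β := by
  induction α with
  | nil => simp
  | cons a α ih =>
    rw [List.cons_append, ris_cons, ih, ris_cons, List.map_cons, List.cons_append]
    congr 1
    rw [cs.wordProd_append, mul_inv_rev]
    group

private theorem lis_eq_map_ris (ω : List B) :
    cs.leftInvSeq ω = (ris ω).map (fun x => π ω * x * (π ω)⁻¹) := by
  induction ω with
  | nil => simp
  | cons i ω ih =>
    rw [ris_cons, CoxeterSystem.leftInvSeq, ih, List.map_cons, List.map_map]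
    congr 1
    · rw [cs.wordProd_cons, mul_inv_rev, cs.inv_simple]
      group
      simp [cs.simple_sq]
    · refine List.map_congr_left fun x _ => ?_
      simp only [Function.comp, MulAut.conj_apply, cs.wordProd_cons, mul_inv_rev, cs.inv_simple]
      group

private theorem conj_injective (c : W) : Function.Injective (fun x : W => c⁻¹ * x * c) := by
  intro x y h
  simpa using congrArg (fun z => c * z * c⁻¹) h

private theorem count_palindrome (χ : List B) (i : B) :
    (List.count (π χ * s i * (π χ)⁻¹) (ris (χ ++ [i] ++ χ.reverse)) : ZMod 2) = 1 := by
  set p := π χ with hp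
  set t := p * s i * p⁻¹ with ht
  rw [List.append_assoc]
  rw [ris_append]
  have hβ : π ([i] ++ χ.reverse) = s i * p⁻¹ := by
    rw [cs.wordProd_append, cs.wordProd_singleton, cs.wordProd_reverse]
  have hhead : ris ([i] ++ χ.reverse) = t :: ris χ.reverse := by
    have h0 : ([i] ++ χ.reverse) = i :: χ.reverse := rfl
    have h1 : (π (χ.reverse))⁻¹ * s i * π (χ.reverse) = t := by
      rw [cs.wordProd_reverse, inv_inv, ht]
    rw [h0, ris_cons, h1]
  rw [hβ, hhead, List.count_append, List.count_cons]
  have c1 : List.count t (List.map (fun x => (s i * p⁻¹)⁻¹ * x * (s i * p⁻¹)) (ris χ))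
      = List.count (s i) (ris χ) := by
    have hfsi : (s i * p⁻¹)⁻¹ * (s i) * (s i * p⁻¹) = t := by
      rw [mul_inv_rev, inv_inv, cs.inv_simple, ht]
      calc p * s i * s i * (s i * p⁻¹) = p * (s i * s i) * (s i * p⁻¹) := by group
        _ = p * (s i * p⁻¹) := by rw [cs.simple_mul_simple_self, mul_one]
        _ = p * s i * p⁻¹ := by group
    rw [← hfsi]
    exact List.count_map_of_injective _ _ (conj_injective _) _
  have c2 : List.count t (ris χ.reverse) = List.count (s i) (ris χ) := by
    rw [cs.rightInvSeq_reverse, List.count_reverse, lis_eq_map_ris]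
    have hgsi : p * (s i) * p⁻¹ = t := rfl
    rw [← hgsi]
    have : Function.Injective (fun x : W => p * x * p⁻¹) := by
      intro x y h
      simpa using congrArg (fun z => p⁻¹ * z * p) h
    exact List.count_map_of_injective _ _ this _
  rw [c1, c2]
  rw [if_pos (beq_self_eq_true t)]
  push_cast
  have : ∀ x : ZMod 2, x + (x + 1) = 1 := by decide
  exact this _

/-- The strong exchange property. -/
theorem strong_exchange {ω : List B} {t : W} (ht : cs.IsReflection t)
    (hlt : ℓ (π ω * t) < ℓ (π ω)) : ∃ j < ω.length, π ω * t = π (ω.eraseIdx j) := by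
  suffices h : t ∈ ris ω by
    obtain ⟨j, hj, hjt⟩ := List.mem_iff_getElem.mp h
    refine ⟨j, by simpa using hj, ?_⟩
    rw [← cs.wordProd_mul_getD_rightInvSeq ω j]
    congr 1
    rw [List.getD_eq_getElem _ 1 hj, hjt]
  by_contra hmem
  have hc : List.count t (ris ω) = 0 := List.count_eq_zero.mpr hmem
  have htt : t * t = 1 := ht.mul_self
  have htinv : t⁻¹ = t := ht.inv
  obtain ⟨p, i, htpi⟩ := ht
  obtain ⟨χ, hχ⟩ := cs.wordProd_surjective p
  have hπδ : π (χ ++ [i] ++ χ.reverse) = t := by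
    rw [cs.wordProd_append, cs.wordProd_append, cs.wordProd_singleton, cs.wordProd_reverse,
      hχ, htpi]
  have h1 : (List.count t (ris (ω ++ (χ ++ [i] ++ χ.reverse))) : ZMod 2) = 1 := by
    rw [ris_append, List.count_append]
    have hmap : List.count t
        (List.map (fun x => (π (χ ++ [i] ++ χ.reverse))⁻¹ * x * π (χ ++ [i] ++ χ.reverse))
          (ris ω)) = 0 := by
      have hmap0 : List.count ((π (χ ++ [i] ++ χ.reverse))⁻¹ * t * (π (χ ++ [i] ++ χ.reverse)))
          (List.map (fun x => (π (χ ++ [i] ++ χ.reverse))⁻¹ * x * π (χ ++ [i] ++ χ.reverse))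
            (ris ω)) = List.count t (ris ω) :=
        List.count_map_of_injective _ _ (conj_injective _) _
      rw [hπδ] at hmap0
      rw [hπδ]
      rw [hc] at hmap0
      have hsimp : t⁻¹ * t * t = t := by
        rw [htinv, htt, one_mul]
      rwa [hsimp] at hmap0
    rw [hmap]
    have hpal := count_palindrome cs χ i
    rw [hχ, ← htpi] at hpal
    push_cast
    rw [hpal]
    ring
  obtain ⟨τ, hτred, hτprod⟩ := cs.exists_reduced_word' (π ω * t)
  have h2 : (List.count t (ris τ) : ZMod 2) = 1 := by
    rw [count_parity cs τ (ω ++ (χ ++ [i] ++ χ.reverse))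
      (by rw [cs.wordProd_append, hπδ, ← hτprod]) t]
    exact h1
  have hmemτ : t ∈ ris τ := by
    by_contra hmem2
    rw [List.count_eq_zero.mpr hmem2] at h2
    simp at h2
  have hinvτ := cs.isRightInversion_of_mem_rightInvSeq hτred hmemτ
  have : ℓ (π τ * t) < ℓ (π τ) := hinvτ.2
  rw [← hτprod, mul_assoc, htt, mul_one] at this
  omega

private theorem length_mul_simple_cases (w : W) (i : B) :
    ℓ (w * s i) = ℓ w + 1 ∨ ℓ (w * s i) < ℓ w := by
  rcases cs.length_mul_simple w i with h | h
  · exact Or.inl h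
  · right
    have hne := cs.length_mul_simple_ne w i
    omega

/-- Every word contains a reduced sublist with the same product. -/
theorem exists_reduced_sublist : ∀ (n : ℕ) (ω : List B), ω.length ≤ n →
    ∃ κ, κ.Sublist ω ∧ cs.IsReduced κ ∧ π κ = π ω := by
  intro n
  induction n with
  | zero =>
    intro ω hω
    rw [List.length_eq_zero_iff.mp (Nat.le_zero.mp hω)]
    exact ⟨[], List.Sublist.refl _, by simp [CoxeterSystem.IsReduced], rfl⟩
  | succ n ih =>
    intro ω hω
    by_cases hred : cs.IsReduced ω
    · exact ⟨ω, List.Sublist.refl _, hred, rfl⟩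
    rcases List.eq_nil_or_concat ω with rfl | ⟨ω', i, rfl⟩
    · exact absurd (by simp [CoxeterSystem.IsReduced]) hred
    rw [List.concat_eq_append] at hred hω ⊢
    have hπ : π (ω' ++ [i]) = π ω' * s i := by
      rw [cs.wordProd_append, cs.wordProd_singleton]
    by_cases hred' : cs.IsReduced ω'
    · rcases length_mul_simple_cases cs (π ω') i with hcase | hcase
      · exact absurd (by
          rw [CoxeterSystem.IsReduced, hπ, hcase, hred']
          simp) hred
      · obtain ⟨j, hj, hje⟩ := strong_exchange cs (cs.isReflection_simple i) hcase
        have hlen : (ω'.eraseIdx j).length ≤ n := by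
          have h5 := List.length_eraseIdx_add_one hj
          simp at hω
          omega
        obtain ⟨κ, hκ1, hκ2, hκ3⟩ := ih (ω'.eraseIdx j) hlen
        refine ⟨κ, ?_, hκ2, ?_⟩
        · exact hκ1.trans ((ω'.eraseIdx_sublist j).trans (List.sublist_append_left ω' [i]))
        · rw [hκ3, ← hje, hπ]
    · have hω' : ω'.length ≤ n := by simp at hω; omega
      obtain ⟨κ', hκ'1, hκ'2, hκ'3⟩ := ih ω' hω'
      have hlt : κ'.length < ω'.length := by
        have h1 : κ'.length = ℓ (π ω') := by rw [← hκ'3]; exact hκ'2.symm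
        have h2 : ℓ (π ω') ≤ ω'.length := cs.length_wordProd_le ω'
        have h3 : ℓ (π ω') ≠ ω'.length := hred'
        omega
      obtain ⟨κ, hκ1, hκ2, hκ3⟩ := ih (κ' ++ [i]) (by simp; omega)
      refine ⟨κ, ?_, hκ2, ?_⟩
      · exact hκ1.trans (hκ'1.append (List.Sublist.refl [i]))
      · rw [hκ3, cs.wordProd_append, cs.wordProd_append, hκ'3]

/-- One step of a Bruhat chain. -/
def brel (v w : W) : Prop := ∃ t, cs.IsReflection t ∧ w = v * t ∧ ℓ v < ℓ w

theorem brel_length {v w : W} (h : brel cs v w) : ℓ v < ℓ w := by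
  obtain ⟨t, _, _, h⟩ := h; exact h

theorem rtg_length_le {v w : W} (h : Relation.ReflTransGen (brel cs) v w) : ℓ v ≤ ℓ w := by
  induction h with
  | refl => exact le_refl _
  | tail _ h2 ih => exact le_of_lt (lt_of_le_of_lt ih (brel_length cs h2))

theorem bruhatLE_of_rtg {v w : W} (h : Relation.ReflTransGen (brel cs) v w) :
    bruhatLE cs v w := by
  refine Relation.ReflTransGen.head_induction_on h ?_ ?_
  · exact ⟨[], by simp, rfl, by simp⟩
  · intro a c hrel hrtg ih
    obtain ⟨t, ht, rfl, hlen⟩ := hrel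
    obtain ⟨l, hl1, hl2, hl3⟩ := ih
    refine ⟨t :: l, ?_, ?_, ?_⟩
    · intro t' ht'
      rcases List.mem_cons.mp ht' with rfl | hmem
      · exact ht
      · exact hl1 t' hmem
    · rw [List.foldl_cons]; exact hl2
    · intro k hk
      cases k with
      | zero => simpa using hlen
      | succ k =>
        rw [List.take_succ_cons, List.take_succ_cons, List.foldl_cons, List.foldl_cons]
        exact hl3 k (by simpa using hk)

theorem rtg_of_bruhatLE {v w : W} (h : bruhatLE cs v w) :
    Relation.ReflTransGen (brel cs) v w := by
  obtain ⟨l, hl1, hl2, hl3⟩ := h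
  induction l generalizing v with
  | nil => rw [← hl2]; exact Relation.ReflTransGen.refl
  | cons t l ih =>
    have hstep : brel cs v (v * t) := by
      refine ⟨t, hl1 t List.mem_cons_self, rfl, ?_⟩
      have := hl3 0 (by simp)
      simpa using this
    refine Relation.ReflTransGen.head hstep ?_
    refine ih (fun t' ht' => hl1 t' (List.mem_cons_of_mem t ht')) ?_ ?_
    · rw [List.foldl_cons] at hl2; exact hl2
    · intro k hk
      have := hl3 (k + 1) (by simpa using hk)
      rw [List.take_succ_cons, List.take_succ_cons, List.foldl_cons, List.foldl_cons] at this
      exact this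

/-- The subword property, easy direction. -/
theorem exists_reduced_sublist_of_rtg {v w : W} (h : Relation.ReflTransGen (brel cs) v w)
    (ω : List B) (hred : cs.IsReduced ω) (hπ : π ω = w) :
    ∃ κ, κ.Sublist ω ∧ cs.IsReduced κ ∧ π κ = v := by
  subst hπ
  refine Relation.ReflTransGen.head_induction_on h ?_ ?_
  · exact ⟨ω, List.Sublist.refl _, hred, rfl⟩
  · intro a c hrel hrtg ih
    obtain ⟨κ, hκ1, hκ2, hκ3⟩ := ih
    obtain ⟨t, ht, heq, hlen⟩ := hrel
    have hπκt : π κ * t = a := by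
      rw [hκ3, heq, mul_assoc, ht.mul_self, mul_one]
    have hlt : ℓ (π κ * t) < ℓ (π κ) := by
      rw [hπκt, hκ3, heq]
      rwa [heq] at hlen
    obtain ⟨j, hj, hje⟩ := strong_exchange cs ht hlt
    obtain ⟨κ', hκ'1, hκ'2, hκ'3⟩ :=
      exists_reduced_sublist cs (κ.eraseIdx j).length _ (le_refl _)
    exact ⟨κ', hκ'1.trans ((κ.eraseIdx_sublist j).trans hκ1), hκ'2,
      by rw [hκ'3, ← hje, hπκt]⟩

private theorem asc_add_one {x : W} {i : B} (h : ℓ x < ℓ (x * s i)) :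
    ℓ (x * s i) = ℓ x + 1 := by
  rcases cs.length_mul_simple x i with h' | h' <;> omega

private theorem desc_of_not_asc {x : W} {i : B} (h : ¬ ℓ x < ℓ (x * s i)) :
    ℓ (x * s i) < ℓ x := by
  rcases length_mul_simple_cases cs x i with h' | h' <;> omega

private theorem mul_simple_simple (x : W) (i : B) : x * s i * s i = x :=
  cs.simple_mul_simple_cancel_right i

/-- Splitting a sublist of `ω ++ [i]`. -/
private theorem sublist_concat_cases {κ ω : List B} {i : B} (h : κ.Sublist (ω ++ [i])) :
    κ.Sublist ω ∨ ∃ κ₁, κ = κ₁ ++ [i] ∧ κ₁.Sublist ω := by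
  rw [List.sublist_append_iff] at h
  obtain ⟨κ₁, κ₂, rfl, h1, h2⟩ := h
  rcases List.sublist_singleton.mp h2 with rfl | rfl
  · left; simpa using h1
  · right; exact ⟨κ₁, rfl, h1⟩

/-- `cpart`: if `v ≤ w`, `ws < w` and `vs > v` then `v ≤ ws`. -/
private theorem cpart_aux {m : ℕ}
    (hsp2 : ∀ ω κ : List B, cs.IsReduced ω → cs.IsReduced κ → κ.Sublist ω →
      ω.length ≤ m → Relation.ReflTransGen (brel cs) (π κ) (π ω))
    {x w : W} {i : B} (hxw : Relation.ReflTransGen (brel cs) x w)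
    (hdesc : ℓ (w * s i) < ℓ w) (hasc : ℓ x < ℓ (x * s i)) (hw : ℓ (w * s i) ≤ m) :
    Relation.ReflTransGen (brel cs) x (w * s i) := by
  obtain ⟨ξ, hξred, hξprod⟩ := cs.exists_reduced_word' (w * s i)
  have hωprod : π (ξ ++ [i]) = w := by
    rw [cs.wordProd_append, cs.wordProd_singleton, ← hξprod, mul_simple_simple]
  have hlw : ℓ w = ℓ (w * s i) + 1 := by
    rcases cs.length_mul_simple w i with h' | h' <;> omega
  have hξlen : ξ.length = ℓ (w * s i) := by rw [hξprod]; exact hξred.symm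
  have hωred : cs.IsReduced (ξ ++ [i]) := by
    show ℓ (π (ξ ++ [i])) = _
    rw [hωprod]
    simp only [List.length_append, List.length_singleton]
    omega
  obtain ⟨κ, hκsub, hκred, hκprod⟩ := exists_reduced_sublist_of_rtg cs hxw _ hωred hωprod
  rcases sublist_concat_cases hκsub with hcase | ⟨κ₁, rfl, hκ₁⟩
  · have := hsp2 ξ κ hξred hκred hcase (by omega)
    rwa [hκprod, ← hξprod] at this
  · exfalso
    have h1 : π κ₁ = x * s i := by
      have : π (κ₁ ++ [i]) = x := hκprod
      rw [cs.wordProd_append, cs.wordProd_singleton] at this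
      rw [← this, mul_simple_simple]
    have h2 : ℓ (x * s i) ≤ κ₁.length := by
      rw [← h1]; exact cs.length_wordProd_le κ₁
    have h3 : ℓ x = κ₁.length + 1 := by
      rw [← hκprod]
      have h4 : ℓ (π (κ₁ ++ [i])) = (κ₁ ++ [i]).length := hκred
      rw [h4]
      simp
    omega

/-- The master induction: ascent-lifting and the hard direction of the
subword property, by strong induction on length. -/
private theorem master : ∀ n : ℕ,
    (∀ x y : W, Relation.ReflTransGen (brel cs) x y → ∀ i : B, ℓ y ≤ n →
      ℓ x < ℓ (x * s i) → ℓ y < ℓ (y * s i) →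
      Relation.ReflTransGen (brel cs) (x * s i) (y * s i)) ∧
    (∀ ω κ : List B, cs.IsReduced ω → cs.IsReduced κ → κ.Sublist ω → ω.length ≤ n →
      Relation.ReflTransGen (brel cs) (π κ) (π ω)) := by
  intro n
  induction n using Nat.strong_induction_on with
  | _ n ih =>
  constructor
  · -- ascent lifting
    intro x y hxy i
    induction hxy with
    | refl => intro _ _ _; exact Relation.ReflTransGen.refl
    | tail h1 h2 ihz =>
      rename_i z y'
      intro hyb hax hay
      obtain ⟨t, ht, heqy, hlz⟩ := h2
      by_cases hzasc : ℓ z < ℓ (z * s i)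
      · have hxzs := ihz (by omega) hax hzasc
        refine hxzs.tail ?_
        refine ⟨s i * t * s i, ?_, ?_, ?_⟩
        · have := ht.conj (s i)
          rwa [cs.inv_simple] at this
        · rw [heqy]
          rw [show z * t * s i = z * s i * (s i * t * s i) from by
            rw [mul_assoc, mul_assoc, mul_assoc, ← mul_assoc (s i) (s i),
              cs.simple_mul_simple_self, one_mul]]
        · rw [asc_add_one cs hzasc, asc_add_one cs hay]
          omega
      · have hzdesc := desc_of_not_asc cs hzasc
        have hn1 : 1 ≤ n := by omega
        have hsp2 := (ih (n - 1) (by omega)).2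
        have hxzs : Relation.ReflTransGen (brel cs) x (z * s i) :=
          cpart_aux cs hsp2 h1 hzdesc hax (by omega)
        have hasc' : Relation.ReflTransGen (brel cs) (x * s i) (z * s i * s i) := by
          refine (ih (n - 1) (by omega)).1 x (z * s i) hxzs i (by omega) hax ?_
          rw [mul_simple_simple]
          exact hzdesc
        rw [mul_simple_simple] at hasc'
        have step1 : brel cs z y' := ⟨t, ht, heqy, hlz⟩
        have step2 : brel cs y' (y' * s i) :=
          ⟨s i, cs.isReflection_simple i, rfl, hay⟩
        exact (hasc'.tail step1).tail step2
  · -- subword property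
    intro ω κ hredω hredκ hsub hlen
    rcases Nat.lt_or_ge ω.length n with hlt | hge
    · exact (ih ω.length hlt).2 ω κ hredω hredκ hsub (le_refl _)
    have hn : ω.length = n := by omega
    rcases List.eq_nil_or_concat ω with rfl | ⟨ω', i, rfl⟩
    · rw [List.sublist_nil.mp hsub]
    rw [List.concat_eq_append] at *
    have hn' : ω'.length + 1 = n := by simpa using hn
    have hredω' : cs.IsReduced ω' := by
      have := hredω.take ω'.length
      rwa [List.take_left] at this
    have hπω : π (ω' ++ [i]) = π ω' * s i := by
      rw [cs.wordProd_append, cs.wordProd_singleton]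
    have hlπω : ℓ (π (ω' ++ [i])) = ω'.length + 1 := by
      rw [hredω]; simp
    have hlπω' : ℓ (π ω') = ω'.length := hredω'
    rcases sublist_concat_cases hsub with hcase | ⟨κ₁, rfl, hκ₁⟩
    · have hrtg : Relation.ReflTransGen (brel cs) (π κ) (π ω') :=
        (ih (n - 1) (by omega)).2 ω' κ hredω' hredκ hcase (by omega)
      refine hrtg.tail ?_
      refine ⟨s i, cs.isReflection_simple i, hπω, by omega⟩
    · have hredκ₁ : cs.IsReduced κ₁ := by
        have := hredκ.take κ₁.length
        rwa [List.take_left] at this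
      have hrtg : Relation.ReflTransGen (brel cs) (π κ₁) (π ω') :=
        (ih (n - 1) (by omega)).2 ω' κ₁ hredω' hredκ₁ hκ₁ (by omega)
      have hπκ : π (κ₁ ++ [i]) = π κ₁ * s i := by
        rw [cs.wordProd_append, cs.wordProd_singleton]
      have hlπκ : ℓ (π (κ₁ ++ [i])) = κ₁.length + 1 := by
        rw [hredκ]; simp
      have hlπκ₁ : ℓ (π κ₁) = κ₁.length := hredκ₁
      have := (ih (n - 1) (by omega)).1 (π κ₁) (π ω') hrtg i (by omega)
        (by rw [← hπκ]; omega) (by rw [← hπω]; omega)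
      rw [← hπκ, ← hπω] at this
      exact this

theorem asc_lift {x y : W} (h : Relation.ReflTransGen (brel cs) x y) (i : B)
    (hx : ℓ x < ℓ (x * s i)) (hy : ℓ y < ℓ (y * s i)) :
    Relation.ReflTransGen (brel cs) (x * s i) (y * s i) :=
  (master cs (ℓ y)).1 x y h i (le_refl _) hx hy

theorem cpart {x w : W} {i : B} (hxw : Relation.ReflTransGen (brel cs) x w)
    (hdesc : ℓ (w * s i) < ℓ w) (hasc : ℓ x < ℓ (x * s i)) :
    Relation.ReflTransGen (brel cs) x (w * s i) :=
  cpart_aux cs (master cs (ℓ (w * s i))).2 hxw hdesc hasc (le_refl _)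

theorem lift_right {v w : W} {i : B} (hvw : Relation.ReflTransGen (brel cs) v w)
    (hd : ℓ (w * s i) < ℓ w) : Relation.ReflTransGen (brel cs) (v * s i) w := by
  by_cases hv : ℓ v < ℓ (v * s i)
  · have h1 := cpart cs hvw hd hv
    have h2 := asc_lift cs h1 i hv (by rw [mul_simple_simple]; exact hd)
    rwa [mul_simple_simple] at h2
  · have hdesc := desc_of_not_asc cs hv
    exact Relation.ReflTransGen.head
      ⟨s i, cs.isReflection_simple i, (mul_simple_simple cs v i).symm, hdesc⟩ hvw

theorem lift_right_desc {v w : W} {i : B} (hvw : Relation.ReflTransGen (brel cs) v w)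
    (hdw : ℓ (w * s i) < ℓ w) (hdv : ℓ (v * s i) < ℓ v) :
    Relation.ReflTransGen (brel cs) (v * s i) (w * s i) := by
  have h0 : Relation.ReflTransGen (brel cs) (v * s i) w :=
    Relation.ReflTransGen.head
      ⟨s i, cs.isReflection_simple i, (mul_simple_simple cs v i).symm, hdv⟩ hvw
  exact cpart cs h0 hdw (by rw [mul_simple_simple]; exact hdv)

theorem rtg_inv {v w : W} (h : Relation.ReflTransGen (brel cs) v w) :
    Relation.ReflTransGen (brel cs) v⁻¹ w⁻¹ := by
  induction h with
  | refl => exact Relation.ReflTransGen.refl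
  | tail h1 h2 ihz =>
    rename_i z y'
    obtain ⟨t, ht, heq, hl⟩ := h2
    refine ihz.tail ⟨z * t * z⁻¹, ht.conj z, ?_, ?_⟩
    · rw [heq]
      rw [mul_inv_rev, ht.inv]
      group
    · rw [cs.length_inv, cs.length_inv]
      exact hl

private theorem inv_mul_simple (x : W) (i : B) : (x⁻¹ * s i)⁻¹ = s i * x := by
  rw [mul_inv_rev, inv_inv, cs.inv_simple]

private theorem length_inv_mul_simple (x : W) (i : B) : ℓ (x⁻¹ * s i) = ℓ (s i * x) := by
  rw [← cs.length_inv (x⁻¹ * s i), inv_mul_simple]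

theorem lift_left {v w : W} {j : B} (hvw : Relation.ReflTransGen (brel cs) v w)
    (hd : ℓ (s j * w) < ℓ w) : Relation.ReflTransGen (brel cs) (s j * v) w := by
  have h1 := rtg_inv cs hvw
  have hd' : ℓ (w⁻¹ * s j) < ℓ w⁻¹ := by
    rw [length_inv_mul_simple, cs.length_inv]
    exact hd
  have h2 := rtg_inv cs (lift_right cs h1 hd')
  rwa [inv_mul_simple, inv_inv] at h2

theorem lift_left_desc {v w : W} {j : B} (hvw : Relation.ReflTransGen (brel cs) v w)
    (hdw : ℓ (s j * w) < ℓ w) (hdv : ℓ (s j * v) < ℓ v) :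
    Relation.ReflTransGen (brel cs) (s j * v) (s j * w) := by
  have h1 := rtg_inv cs hvw
  have hdw' : ℓ (w⁻¹ * s j) < ℓ w⁻¹ := by
    rw [length_inv_mul_simple, cs.length_inv]; exact hdw
  have hdv' : ℓ (v⁻¹ * s j) < ℓ v⁻¹ := by
    rw [length_inv_mul_simple, cs.length_inv]; exact hdv
  have h2 := rtg_inv cs (lift_right_desc cs h1 hdw' hdv')
  rwa [inv_mul_simple, inv_mul_simple] at h2

theorem cpart_left {v w : W} {j : B} (hvw : Relation.ReflTransGen (brel cs) v w)
    (hdw : ℓ (s j * w) < ℓ w) (hav : ℓ v < ℓ (s j * v)) :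
    Relation.ReflTransGen (brel cs) v (s j * w) := by
  have h1 := rtg_inv cs hvw
  have hdw' : ℓ (w⁻¹ * s j) < ℓ w⁻¹ := by
    rw [length_inv_mul_simple, cs.length_inv]; exact hdw
  have hav' : ℓ v⁻¹ < ℓ (v⁻¹ * s j) := by
    rw [length_inv_mul_simple, cs.length_inv]; exact hav
  have h2 := rtg_inv cs (cpart cs h1 hdw' hav')
  rwa [inv_mul_simple, inv_inv] at h2

private theorem brel_left_desc {x : W} {j : B} (h : ℓ (s j * x) < ℓ x) :
    brel cs (s j * x) x := by
  refine ⟨x⁻¹ * s j * x, ?_, ?_, h⟩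
  · have := (cs.isReflection_simple j).conj x⁻¹
    rwa [inv_inv] at this
  · have h1 : (s j * x) * (x⁻¹ * s j * x) = s j * (s j * x) := by group
    rw [h1, cs.simple_mul_simple_cancel_left]

/-- If `sv < v`, `vt < v` and `ℓ(svt) = ℓ(v)` then `sv = vt`. -/
theorem square {v : W} {i j : B} (hl : ℓ (s j * v) < ℓ v) (hr : ℓ (v * s i) < ℓ v)
    (he : ℓ (s j * v * s i) = ℓ v) : s j * v = v * s i := by
  obtain ⟨ξ, hξred, hξprod⟩ := cs.exists_reduced_word' (v * s i)
  have hlv : ℓ v = ℓ (v * s i) + 1 := by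
    rcases cs.length_mul_simple v i with h | h <;> omega
  have hω : π (ξ ++ [i]) = v := by
    rw [cs.wordProd_append, cs.wordProd_singleton, ← hξprod, mul_simple_simple]
  have hξlen : ξ.length = ℓ (v * s i) := by rw [hξprod]; exact hξred.symm
  have ht1 : cs.IsReflection (v⁻¹ * s j * v) := by
    have := (cs.isReflection_simple j).conj v⁻¹
    rwa [inv_inv] at this
  have hvt : v * (v⁻¹ * s j * v) = s j * v := by group
  have hlt : ℓ (π (ξ ++ [i]) * (v⁻¹ * s j * v)) < ℓ (π (ξ ++ [i])) := by
    rw [hω, hvt]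
    exact hl
  obtain ⟨k, hk, hke⟩ := strong_exchange cs ht1 hlt
  rw [hω, hvt] at hke
  rcases Nat.lt_or_ge k ξ.length with hkl | hkg
  · exfalso
    rw [List.eraseIdx_append_of_lt_length hkl] at hke
    rw [cs.wordProd_append, cs.wordProd_singleton] at hke
    have h4 : s j * v * s i = π (ξ.eraseIdx k) := by
      rw [hke, mul_simple_simple]
    have h5 : ℓ (s j * v * s i) ≤ (ξ.eraseIdx k).length := by
      rw [h4]; exact cs.length_wordProd_le _
    have h6 := List.length_eraseIdx_add_one hkl
    omega
  · have hkeq : k = ξ.length := by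
      simp only [List.length_append, List.length_singleton] at hk
      omega
    subst hkeq
    rw [List.eraseIdx_append_of_length_le (le_refl _)] at hke
    simp only [Nat.sub_self, List.eraseIdx_zero, List.tail_cons, List.append_nil] at hke
    rw [hke, ← hξprod]

private theorem theta_wordProd (θ : W ≃* W) (hS : PreservesSimples cs θ) :
    ∀ ω : List B, ∃ ω' : List B, ω'.length = ω.length ∧ θ (π ω) = π ω' := by
  intro ω
  induction ω with
  | nil => exact ⟨[], rfl, by simp⟩
  | cons i ω ihω =>
    obtain ⟨j, hj⟩ := hS i
    obtain ⟨ω', hl, hp⟩ := ihω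
    refine ⟨j :: ω', by simp [hl], ?_⟩
    rw [cs.wordProd_cons, map_mul, hj, hp, cs.wordProd_cons]

private theorem theta_length (θ : W ≃* W) (hinv : ∀ w : W, θ (θ w) = w)
    (hS : PreservesSimples cs θ) (u : W) : ℓ (θ u) = ℓ u := by
  have hle : ∀ u : W, ℓ (θ u) ≤ ℓ u := by
    intro u
    obtain ⟨ω, hlen, hprod⟩ := cs.exists_reduced_word u
    obtain ⟨ω', hl, hp⟩ := theta_wordProd cs θ hS ω
    have hθu : θ u = π ω' := by rw [hprod, hp]
    rw [hθu]
    calc ℓ (π ω') ≤ ω'.length := cs.length_wordProd_le ω'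
      _ = ℓ u := by rw [hl, hprod]; exact hlen.symm
  have h1 := hle u
  have h2 := hle (θ u)
  rw [hinv u] at h2
  omega

private theorem length_simple_mul_cases (w : W) (j : B) :
    ℓ (s j * w) = ℓ w + 1 ∨ ℓ (s j * w) < ℓ w := by
  have hne := cs.length_simple_mul_ne w j
  rcases cs.length_simple_mul w j with h | h <;> omega

end BruhatAux


open BruhatAux

/-- Lifting property for twisted involutions (Lemma 3.6). -/
theorem stmt_7 {B W : Type*} [Group W] {M : CoxeterMatrix B}
    (cs : CoxeterSystem M W) (θ : W ≃* W)
    (hinv : ∀ w : W, θ (θ w) = w) (hS : PreservesSimples cs θ)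
    (v w : W) (hv : θ v = v⁻¹) (hw : θ w = w⁻¹)
    (hvw : bruhatLE cs v w) (i : B) (hd : cs.IsRightDescent w i) :
    bruhatLE cs (twMul cs θ v i) w ∧
      (cs.IsRightDescent v i → bruhatLE cs (twMul cs θ v i) (twMul cs θ w i)) := by
  obtain ⟨j, hj⟩ := hS i
  have hθl : ∀ u : W, cs.length (θ u) = cs.length u := theta_length cs θ hinv hS
  have hd' : cs.length (w * cs.simple i) < cs.length w := hd
  have hvw' := rtg_of_bruhatLE cs hvw
  -- left-descent transfer for twisted involutions
  have hLD : ∀ u : W, θ u = u⁻¹ →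
      cs.length (cs.simple j * u) = cs.length (u * cs.simple i) := by
    intro u hu
    have h1 : θ (cs.simple j * u) = cs.simple i * u⁻¹ := by
      rw [map_mul, hu]
      congr 1
      rw [← hj, hinv]
    have h2 : cs.length (cs.simple j * u) = cs.length (cs.simple i * u⁻¹) := by
      rw [← h1, hθl]
    rw [h2, ← cs.length_inv (cs.simple i * u⁻¹), mul_inv_rev, inv_inv, cs.inv_simple]
  have hldw : cs.length (cs.simple j * w) < cs.length w := by
    rw [hLD w hw]; exact hd'
  -- the two-sided descent lemma for twisted involutions
  have hTW : ∀ u : W, θ u = u⁻¹ → cs.length (u * cs.simple i) < cs.length u →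
      cs.simple j * u * cs.simple i ≠ u →
      cs.length (cs.simple j * u * cs.simple i) < cs.length (u * cs.simple i) := by
    intro u hu hdu hne
    have hld : cs.length (cs.simple j * u) < cs.length u := by
      rw [hLD u hu]; exact hdu
    rcases length_simple_mul_cases cs (u * cs.simple i) j with h | h
    · exfalso
      have hlu : cs.length u = cs.length (u * cs.simple i) + 1 := by
        rcases cs.length_mul_simple u i with h' | h' <;> omega
      have hsq : cs.simple j * u = u * cs.simple i := by
        refine square cs hld hdu ?_
        rw [mul_assoc, h]
        omega
      apply hne
      rw [hsq, mul_simple_simple]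
    · rwa [← mul_assoc] at h
  -- part (i)
  have parti : Relation.ReflTransGen (brel cs) (twMul cs θ v i) w := by
    have h1 : Relation.ReflTransGen (brel cs) (v * cs.simple i) w := lift_right cs hvw' hd'
    by_cases hcv : θ (cs.simple i) * v * cs.simple i = v
    · rw [twMul, if_pos hcv]
      exact h1
    · rw [twMul, if_neg hcv, hj]
      have h2 := lift_left cs h1 hldw
      rwa [← mul_assoc] at h2
  refine ⟨bruhatLE_of_rtg cs parti, ?_⟩
  intro hdv
  have hdv' : cs.length (v * cs.simple i) < cs.length v := hdv
  have hvsws : Relation.ReflTransGen (brel cs) (v * cs.simple i) (w * cs.simple i) :=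
    lift_right_desc cs hvw' hd' hdv'
  by_cases hcw : θ (cs.simple i) * w * cs.simple i = w
  · by_cases hcv : θ (cs.simple i) * v * cs.simple i = v
    · rw [twMul, if_pos hcv, twMul, if_pos hcw]
      exact bruhatLE_of_rtg cs hvsws
    · rw [twMul, if_neg hcv, twMul, if_pos hcw, hj]
      have htw : cs.length (cs.simple j * v * cs.simple i) < cs.length (v * cs.simple i) := by
        refine hTW v hv hdv' ?_
        rwa [hj] at hcv
      have hstep : brel cs (cs.simple j * (v * cs.simple i)) (v * cs.simple i) :=
        brel_left_desc cs (by rwa [← mul_assoc])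
      have := Relation.ReflTransGen.head hstep hvsws
      rw [← mul_assoc] at this
      exact bruhatLE_of_rtg cs this
  · have htww : cs.length (cs.simple j * w * cs.simple i) < cs.length (w * cs.simple i) := by
      refine hTW w hw hd' ?_
      rwa [hj] at hcw
    by_cases hcv : θ (cs.simple i) * v * cs.simple i = v
    · rw [twMul, if_pos hcv, twMul, if_neg hcw, hj]
      have hasc : cs.length (v * cs.simple i) < cs.length (cs.simple j * (v * cs.simple i)) := by
        rw [← mul_assoc]
        rw [show cs.simple j * v * cs.simple i = v from by rwa [hj] at hcv]
        exact hdv'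
      have := cpart_left cs hvsws (by rwa [mul_assoc] at htww) hasc
      rw [← mul_assoc] at this
      exact bruhatLE_of_rtg cs this
    · rw [twMul, if_neg hcv, twMul, if_neg hcw, hj]
      have htwv : cs.length (cs.simple j * v * cs.simple i) < cs.length (v * cs.simple i) := by
        refine hTW v hv hdv' ?_
        rwa [hj] at hcv
      have := lift_left_desc cs hvsws (by rwa [mul_assoc] at htww)
        (by rwa [mul_assoc] at htwv)
      rw [← mul_assoc, ← mul_assoc] at this
      exact bruhatLE_of_rtg cs this
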